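/- Let m ∈ ℤ. Denote by ℒ(f) ∈ ℂ((z)) the Laurent expansion at 0 of a function f meromorphic at 0. Then ℂ((z)) is the internal direct sum of the ℂ-subspace ℂ[[z]] and the ℂ-linear span of the Laurent expansions ℒ( (θ′/θ)^{(j)}(z) · e^{−2iπ m z} ) for j ∈ ℕ, where (θ′/θ)^{(j)} denotes the j-th derivative of θ′/θ. -/

import Mathlib

open Complex

/-- The lattice `Γ = ℤ + τℤ` associated to `τ`. -/
def lattice (τ : ℂ) : Set ℂ := {z : ℂ | ∃ m n : ℤ, z = (m : ℂ) + (n : ℂ) * τ}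

/-- `F ∈ ℂ((z))` is the Laurent expansion at `0` of `f : ℂ → ℂ`:
the series `Σ F_n z^n` converges to `f z` on a punctured disc around `0`. -/
def IsLaurentExpansionAt (F : LaurentSeries ℂ) (f : ℂ → ℂ) : Prop :=
  ∃ ρ : ℝ, 0 < ρ ∧ ∀ z : ℂ, z ≠ 0 → ‖z‖ < ρ →
    HasSum (fun n : ℤ => F.coeff n * z ^ n) (f z)

/-- `ℂ[[z]]` viewed as the subspace of `ℂ((z))` of series with no negative
coefficients. -/
noncomputable def powerSeriesSubspace : Submodule ℂ (LaurentSeries ℂ) where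
  carrier := {F : LaurentSeries ℂ | ∀ n : ℤ, n < 0 → F.coeff n = 0}
  add_mem' := by
    intro a b ha hb n hn
    simp only [HahnSeries.coeff_add, ha n hn, hb n hn, add_zero]
  zero_mem' := by
    intro n hn
    simp
  smul_mem' := by
    intro c F hF n hn
    simp only [HahnSeries.coeff_smul, hF n hn, smul_zero]

open Topology Filter Set
open scoped NNReal ENNReal

private lemma analyticOnNhd_iteratedDeriv {f : ℂ → ℂ} {s : Set ℂ}
    (hf : AnalyticOnNhd ℂ f s) (n : ℕ) : AnalyticOnNhd ℂ (iteratedDeriv n f) s := by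
  induction n with
  | zero => simpa [iteratedDeriv_zero] using hf
  | succ n ih => rw [iteratedDeriv_succ]; exact ih.deriv

private lemma eqOn_iteratedDeriv_add {f g : ℂ → ℂ} {s : Set ℂ} (hs : IsOpen s)
    (hf : AnalyticOnNhd ℂ f s) (hg : AnalyticOnNhd ℂ g s) (n : ℕ) :
    Set.EqOn (iteratedDeriv n fun w => f w + g w)
      (fun z => iteratedDeriv n f z + iteratedDeriv n g z) s := by
  induction n with
  | zero => intro z hz; simp [iteratedDeriv_zero]
  | succ n ih =>
    intro z hz
    rw [iteratedDeriv_succ, iteratedDeriv_succ, iteratedDeriv_succ]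
    have h1 : deriv (iteratedDeriv n fun w => f w + g w) z
        = deriv (fun z => iteratedDeriv n f z + iteratedDeriv n g z) z := by
      apply Filter.EventuallyEq.deriv_eq
      filter_upwards [hs.mem_nhds hz] with w hw using ih hw
    rw [h1]
    exact deriv_add ((analyticOnNhd_iteratedDeriv hf n z hz).differentiableAt)
      ((analyticOnNhd_iteratedDeriv hg n z hz).differentiableAt)

private lemma laurent_tendsto {Fc : LaurentSeries ℂ} {f : ℂ → ℂ} {d : ℤ}
    (hexp : IsLaurentExpansionAt Fc f)
    (hvan : ∀ n : ℤ, n < d → Fc.coeff n = 0) :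
    Filter.Tendsto (fun z : ℂ => z ^ (-d) * f z) (𝓝[≠] (0:ℂ)) (𝓝 (Fc.coeff d)) := by
  obtain ⟨ρ, hρ, hsum⟩ := hexp
  have key : ∀ z : ℂ, z ≠ 0 → ‖z‖ < ρ →
      HasSum (fun k : ℕ => Fc.coeff (d + k) * z ^ k) (z ^ (-d) * f z) := by
    intro z hz hzρ
    have h1 := (hsum z hz hzρ).mul_left (z ^ (-d))
    have hinj : Function.Injective (fun k : ℕ => d + (k : ℤ)) := by
      intro x y hxy; simpa using hxy
    have h2 : ∀ n : ℤ, n ∉ Set.range (fun k : ℕ => d + (k : ℤ)) →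
        z ^ (-d) * (Fc.coeff n * z ^ n) = 0 := by
      intro n hn
      have hnd : n < d := by
        by_contra hcon
        push_neg at hcon
        refine hn ⟨(n - d).toNat, ?_⟩
        show d + ((n - d).toNat : ℤ) = n
        omega
      rw [hvan n hnd, zero_mul, mul_zero]
    have h3 := (hinj.hasSum_iff h2).2 h1
    have h4 : (fun k : ℕ => Fc.coeff (d + k) * z ^ k) =
        (fun n : ℤ => z ^ (-d) * (Fc.coeff n * z ^ n)) ∘ (fun k : ℕ => d + (k : ℤ)) := by
      funext k
      simp only [Function.comp]
      rw [← zpow_natCast z k, show (k:ℤ) = -d + (d + k) by ring, zpow_add₀ hz]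
      ring
    rw [h4]; exact h3
  have hρ2 : (0:ℝ) < ρ/2 := by linarith
  set z0 : ℂ := ((ρ/2 : ℝ) : ℂ) with hz0def
  have hz0ne : z0 ≠ 0 := by
    simp only [hz0def, ne_eq, Complex.ofReal_eq_zero]
    exact ne_of_gt hρ2
  have hz0norm : ‖z0‖ = ρ/2 := by
    rw [hz0def, Complex.norm_real, Real.norm_eq_abs, abs_of_pos hρ2]
  have hsml := (key z0 hz0ne (by rw [hz0norm]; linarith)).summable
  set p : FormalMultilinearSeries ℂ ℂ ℂ :=
    fun n => ContinuousMultilinearMap.mkPiRing ℂ (Fin n) (Fc.coeff (d + n)) with hpdef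
  have hpapp : ∀ (n : ℕ) (y : ℂ), (p n fun _ => y) = Fc.coeff (d + n) * y ^ n := by
    intro n y
    simp [hpdef, ContinuousMultilinearMap.mkPiRing_apply, Finset.prod_const,
      smul_eq_mul, mul_comm]
  have hpnorm : ∀ n : ℕ, ‖p n‖ = ‖Fc.coeff (d + n)‖ := fun n =>
    ContinuousMultilinearMap.norm_mkPiRing _
  set r : ℝ≥0 := ⟨ρ/2, le_of_lt hρ2⟩ with hrdef
  have hrad : (r : ℝ≥0∞) ≤ p.radius := by
    apply p.le_radius_of_tendsto (l := 0)
    have h0 := hsml.tendsto_atTop_zero.norm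
    rw [norm_zero] at h0
    refine h0.congr fun n => ?_
    rw [norm_mul, norm_pow, hz0norm, hpnorm, hrdef]; rfl
  have hrpos : (0 : ℝ≥0∞) < (r : ℝ≥0∞) := by
    rw [ENNReal.coe_pos]
    exact_mod_cast hρ2
  have hradpos : 0 < p.radius := lt_of_lt_of_le hrpos hrad
  have hsum0 : p.sum 0 = Fc.coeff d := by
    have hs0 : HasSum (fun n : ℕ => p n fun _ => (0:ℂ)) (p.sum 0) :=
      p.hasSum (by simpa [EMetric.mem_ball] using hradpos)
    have hs1 : HasSum (fun n : ℕ => p n fun _ => (0:ℂ)) (Fc.coeff d) := by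
      have h := hasSum_single (f := fun n : ℕ => p n fun _ => (0:ℂ)) 0
        (fun b hb => by simp [hpapp, zero_pow hb])
      simpa [hpapp] using h
    exact hs0.unique hs1
  have hcont : ContinuousAt p.sum 0 :=
    (p.hasFPowerSeriesOnBall hradpos).analyticAt.continuousAt
  have hev : (fun z : ℂ => z ^ (-d) * f z) =ᶠ[𝓝[≠] (0:ℂ)] p.sum := by
    have h1 : ∀ᶠ z : ℂ in 𝓝 0, ‖z‖ < ρ/2 := by
      filter_upwards [Metric.ball_mem_nhds (0:ℂ) hρ2] with z hz
      simpa [dist_zero_right] using hz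
    filter_upwards [self_mem_nhdsWithin, Filter.Eventually.filter_mono nhdsWithin_le_nhds h1] with z hz hznorm
    have hk := key z hz (by linarith)
    have hz_ball : z ∈ Metric.eball (0:ℂ) p.radius := by
      rw [Metric.mem_eball, edist_zero_right, enorm_eq_nnnorm]
      refine lt_of_lt_of_le ?_ hrad
      rw [ENNReal.coe_lt_coe, ← NNReal.coe_lt_coe, coe_nnnorm]
      exact hznorm
    have hps : HasSum (fun n : ℕ => p n fun _ => z) (p.sum z) := p.hasSum hz_ball
    have hps' : HasSum (fun n : ℕ => Fc.coeff (d + n) * z ^ n) (p.sum z) := by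
      simpa only [hpapp] using hps
    exact hk.unique hps'
  have htend := hcont.tendsto.mono_left (nhdsWithin_le_nhds (s := {(0:ℂ)}ᶜ))
  rw [hsum0] at htend
  exact htend.congr' hev.symm

private lemma theta_tendsto (θ : ℂ → ℂ) (hθ_entire : Differentiable ℂ θ)
    (hθ_deriv : deriv θ 0 = 1) (hθ0 : θ 0 = 0) (c : ℂ) (j : ℕ) :
    ∃ L : ℂ, L ≠ 0 ∧ Filter.Tendsto
      (fun z : ℂ => z ^ ((j:ℤ)+1) *
        (iteratedDeriv j (fun w => deriv θ w / θ w) z * Complex.exp (c * z)))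
      (𝓝[≠] (0:ℂ)) (𝓝 L) := by
  obtain ⟨p, hp⟩ := hθ_entire.analyticAt 0
  have huA : AnalyticAt ℂ (dslope θ 0) 0 := ⟨p.fslope, hp.has_fpower_series_dslope_fslope⟩
  set u := dslope θ 0 with hu
  have hu0 : u 0 = 1 := by rw [hu, dslope_same, hθ_deriv]
  have hθeq : ∀ z : ℂ, θ z = z * u z := by
    intro z
    have h := sub_smul_dslope θ 0 z
    simp only [sub_zero, hθ0, smul_eq_mul] at h
    rw [← hu] at h
    exact h.symm
  have hev : ∀ᶠ z in 𝓝 (0:ℂ), AnalyticAt ℂ u z ∧ u z ≠ 0 :=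
    huA.eventually_analyticAt.and
      (huA.continuousAt.eventually_ne (by rw [hu0]; exact one_ne_zero))
  obtain ⟨r, hr, hb⟩ := Metric.eventually_nhds_iff_ball.1 hev
  set V := Metric.ball (0:ℂ) r with hV
  have hVopen : IsOpen V := Metric.isOpen_ball
  have hV0 : (0:ℂ) ∈ V := Metric.mem_ball_self hr
  have huV : AnalyticOnNhd ℂ u V := fun z hz => (hb z hz).1
  have hune : ∀ z ∈ V, u z ≠ 0 := fun z hz => (hb z hz).2
  have hhA : AnalyticOnNhd ℂ (fun z => deriv u z / u z) V :=
    fun z hz => ((huV.deriv) z hz).div (huV z hz) (hune z hz)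
  set s := V \ {(0:ℂ)} with hs
  have hsopen : IsOpen s := hVopen.sdiff isClosed_singleton
  have hseq : Set.EqOn (fun w => deriv θ w / θ w)
      (fun w => w⁻¹ + deriv u w / u w) s := by
    intro z hz
    have hzV : z ∈ V := hz.1
    have hz0 : z ≠ 0 := by simpa using hz.2
    have hder : deriv θ z = u z + z * deriv u z := by
      have hfun : θ = fun w => w * u w := funext hθeq
      rw [hfun, deriv_fun_mul differentiableAt_fun_id ((huV z hzV).differentiableAt)]
      simp
    have huz := hune z hzV
    simp only
    rw [hder, hθeq z]
    field_simp
  have hIterEq := hseq.iteratedDeriv_of_isOpen hsopen j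
  have hinvA : AnalyticOnNhd ℂ (fun w : ℂ => w⁻¹) s := by
    intro z hz
    have hz0 : z ≠ 0 := by simpa using hz.2
    exact analyticAt_inv hz0
  have hhs : AnalyticOnNhd ℂ (fun z => deriv u z / u z) s := fun z hz => hhA z hz.1
  have hadd := eqOn_iteratedDeriv_add hsopen hinvA hhs j
  set L : ℂ := ∏ i ∈ Finset.range j, (-1 - (i:ℂ)) with hL
  have hLne : L ≠ 0 := by
    rw [hL]
    apply Finset.prod_ne_zero_iff.2
    intro i _
    have hcast : (-1 - (i:ℂ)) = -((i+1 : ℕ) : ℂ) := by push_cast; ring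
    rw [hcast]
    exact neg_ne_zero.mpr (Nat.cast_ne_zero.mpr (Nat.succ_ne_zero i))
  have hH : ContinuousAt (iteratedDeriv j (fun z => deriv u z / u z)) 0 :=
    ((analyticOnNhd_iteratedDeriv hhA j) 0 hV0).continuousAt
  refine ⟨L, hLne, ?_⟩
  set G : ℂ → ℂ := fun z =>
    (L + z ^ (j+1) * iteratedDeriv j (fun w => deriv u w / u w) z) * Complex.exp (c * z)
    with hG
  have hGcont : ContinuousAt G 0 := by
    apply ContinuousAt.mul
    · exact continuousAt_const.add (((continuous_pow (j+1)).continuousAt).mul hH)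
    · exact (Complex.continuous_exp.comp (continuous_const.mul continuous_id)).continuousAt
  have hG0 : G 0 = L := by simp [hG]
  have hsmem : ∀ᶠ z in 𝓝[≠] (0:ℂ), z ∈ s := by
    filter_upwards [self_mem_nhdsWithin,
      mem_nhdsWithin_of_mem_nhds (hVopen.mem_nhds hV0)] with z h1 h2
    exact ⟨h2, h1⟩
  have hcalc : G =ᶠ[𝓝[≠] (0:ℂ)] fun z => z ^ ((j:ℤ)+1) *
        (iteratedDeriv j (fun w => deriv θ w / θ w) z * Complex.exp (c * z)) := by
    filter_upwards [hsmem] with z hzs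
    have hz0 : z ≠ 0 := by simpa using hzs.2
    rw [hIterEq hzs, hadd hzs]
    have hiter : iteratedDeriv j (fun w : ℂ => w⁻¹) z = L * z ^ (-1 - (j:ℤ)) := by
      rw [iteratedDeriv_eq_iterate]
      rw [hL, show (fun w : ℂ => w⁻¹) = (fun w : ℂ => w ^ (-1 : ℤ)) by funext w; simp]
      exact_mod_cast iter_deriv_zpow (-1) z j
    simp only [hiter, hG]
    have hzp : z ^ ((j:ℤ)+1) * z ^ (-1 - (j:ℤ)) = 1 := by
      rw [← zpow_add₀ hz0, show ((j:ℤ)+1) + (-1 - (j:ℤ)) = 0 by ring, zpow_zero]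
    have hzn : z ^ ((j:ℤ)+1) = z ^ (j+1) := by
      rw [show ((j:ℤ)+1) = ((j+1 : ℕ) : ℤ) by push_cast; ring, zpow_natCast]
    have hexpand : z ^ ((j:ℤ)+1) *
        ((L * z ^ (-1 - (j:ℤ)) + iteratedDeriv j (fun w => deriv u w / u w) z) *
          Complex.exp (c * z)) =
        ((z ^ ((j:ℤ)+1) * z ^ (-1 - (j:ℤ))) * L +
          z ^ ((j:ℤ)+1) * iteratedDeriv j (fun w => deriv u w / u w) z) *
          Complex.exp (c * z) := by ring
    rw [hexpand, hzp, one_mul, hzn]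
  have hfin := hGcont.tendsto.mono_left (nhdsWithin_le_nhds (s := {(0:ℂ)}ᶜ))
  rw [hG0] at hfin
  exact hfin.congr' hcalc

private lemma coeff_facts {Fc : LaurentSeries ℂ} {f : ℂ → ℂ}
    (hexp : IsLaurentExpansionAt Fc f) {L : ℂ} (hL : L ≠ 0) {j : ℕ}
    (htend : Filter.Tendsto (fun z : ℂ => z ^ ((j:ℤ)+1) * f z) (𝓝[≠] (0:ℂ)) (𝓝 L)) :
    Fc.coeff (-((j:ℤ)+1)) ≠ 0 ∧ ∀ n : ℤ, n < -((j:ℤ)+1) → Fc.coeff n = 0 := by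
  have hFne : Fc ≠ 0 := by
    rintro rfl
    obtain ⟨ρ, hρ, hs⟩ := hexp
    have h1 : ∀ᶠ z : ℂ in 𝓝 0, ‖z‖ < ρ := by
      filter_upwards [Metric.ball_mem_nhds (0:ℂ) hρ] with z hz
      simpa [dist_zero_right] using hz
    have hzero : (fun z : ℂ => z ^ ((j:ℤ)+1) * f z) =ᶠ[𝓝[≠] (0:ℂ)] fun _ => 0 := by
      filter_upwards [self_mem_nhdsWithin, Filter.Eventually.filter_mono nhdsWithin_le_nhds h1] with z hz hzρ
      have hsz : HasSum (fun _ : ℤ => (0:ℂ)) (f z) := by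
        simpa using hs z hz hzρ
      rw [hsz.unique hasSum_zero, mul_zero]
    have h2 : Filter.Tendsto (fun z : ℂ => z ^ ((j:ℤ)+1) * f z) (𝓝[≠] (0:ℂ)) (𝓝 0) :=
      Filter.Tendsto.congr' hzero.symm tendsto_const_nhds
    exact hL (tendsto_nhds_unique htend h2)
  have hvan : ∀ n : ℤ, n < Fc.order → Fc.coeff n = 0 := fun n hn =>
    HahnSeries.coeff_eq_zero_of_lt_order hn
  have htd := laurent_tendsto ⟨_, (hexp.choose_spec.1 : (0:ℝ) < _), hexp.choose_spec.2⟩ hvan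
  have hcd : Fc.coeff Fc.order ≠ 0 := mt HahnSeries.coeff_order_eq_zero.1 hFne
  set d := Fc.order with hd
  rcases lt_trichotomy d (-((j:ℤ)+1)) with h | h | h
  · exfalso
    set k : ℕ := (-d - ((j:ℤ)+1)).toNat with hk
    have hkz : (k:ℤ) = -d - ((j:ℤ)+1) := by omega
    have hkne : k ≠ 0 := by omega
    have heq : (fun z : ℂ => z ^ (-d) * f z) =ᶠ[𝓝[≠] (0:ℂ)]
        fun z => z ^ k * (z ^ ((j:ℤ)+1) * f z) := by
      filter_upwards [self_mem_nhdsWithin] with z hz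
      have hz0 : z ≠ 0 := hz
      rw [← mul_assoc, ← zpow_natCast z k, ← zpow_add₀ hz0]
      congr 2
      omega
    have hpow : Filter.Tendsto (fun z : ℂ => z ^ k) (𝓝[≠] (0:ℂ)) (𝓝 0) := by
      have := ((continuous_pow k).tendsto (0:ℂ)).mono_left
        (nhdsWithin_le_nhds (s := {(0:ℂ)}ᶜ))
      rwa [zero_pow hkne] at this
    have h2 : Filter.Tendsto (fun z : ℂ => z ^ k * (z ^ ((j:ℤ)+1) * f z))
        (𝓝[≠] (0:ℂ)) (𝓝 (0 * L)) := hpow.mul htend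
    rw [zero_mul] at h2
    exact hcd (tendsto_nhds_unique htd (h2.congr' heq.symm))
  · refine ⟨?_, ?_⟩
    · rw [← h]; exact hcd
    · intro n hn; exact hvan n (by omega)
  · exfalso
    set k : ℕ := (d + (j:ℤ) + 1).toNat with hk
    have hkz : (k:ℤ) = d + (j:ℤ) + 1 := by omega
    have hkne : k ≠ 0 := by omega
    have heq : (fun z : ℂ => z ^ ((j:ℤ)+1) * f z) =ᶠ[𝓝[≠] (0:ℂ)]
        fun z => z ^ k * (z ^ (-d) * f z) := by
      filter_upwards [self_mem_nhdsWithin] with z hz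
      have hz0 : z ≠ 0 := hz
      rw [← mul_assoc, ← zpow_natCast z k, ← zpow_add₀ hz0]
      congr 2
      omega
    have hpow : Filter.Tendsto (fun z : ℂ => z ^ k) (𝓝[≠] (0:ℂ)) (𝓝 0) := by
      have := ((continuous_pow k).tendsto (0:ℂ)).mono_left
        (nhdsWithin_le_nhds (s := {(0:ℂ)}ᶜ))
      rwa [zero_pow hkne] at this
    have h2 : Filter.Tendsto (fun z : ℂ => z ^ k * (z ^ (-d) * f z))
        (𝓝[≠] (0:ℂ)) (𝓝 (0 * Fc.coeff d)) := hpow.mul htd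
    rw [zero_mul] at h2
    exact hL (tendsto_nhds_unique htend (h2.congr' heq.symm))

/-- **`ℂ((z)) = ℂ[[z]] ⊕ span{ℒ((θ′/θ)^{(j)} e^{−2iπmz})}` for `m ∈ ℤ`.**
If `F j` is the Laurent expansion at `0` of `(θ′/θ)^{(j)}(z) e^{−2iπ m z}` for every
`j`, then `ℂ((z))` is the internal direct sum of `ℂ[[z]]` and the span of the `F j`. -/
theorem laurent_decomposition_L0 (τ : ℂ) (hτ : 0 < τ.im) (θ : ℂ → ℂ)
    (hθ_entire : Differentiable ℂ θ)
    (hθ_deriv : deriv θ 0 = 1)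
    (hθ_zero : ∀ z : ℂ, θ z = 0 ↔ z ∈ lattice τ)
    (hθ_per1 : ∀ z : ℂ, θ (z + 1) = - θ z)
    (hθ_perτ : ∀ z : ℂ, θ (z + τ) =
      - Complex.exp (-(Real.pi : ℂ) * Complex.I * τ) *
        Complex.exp (-2 * (Real.pi : ℂ) * Complex.I * z) * θ z)
    (m : ℤ)
    (F : ℕ → LaurentSeries ℂ)
    (hF : ∀ j : ℕ, IsLaurentExpansionAt (F j)
      (fun z => iteratedDeriv j (fun w => deriv θ w / θ w) z *
        Complex.exp (-2 * (Real.pi : ℂ) * Complex.I * (m : ℂ) * z))) :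
    IsCompl powerSeriesSubspace (Submodule.span ℂ (Set.range F)) := by
  have hθ0 : θ 0 = 0 := (hθ_zero 0).2 ⟨0, 0, by simp⟩
  have hkey : ∀ j : ℕ, (F j).coeff (-((j:ℤ)+1)) ≠ 0 ∧
      ∀ n : ℤ, n < -((j:ℤ)+1) → (F j).coeff n = 0 := by
    intro j
    obtain ⟨L, hL, htend⟩ := theta_tendsto θ hθ_entire hθ_deriv hθ0
      (-2 * (Real.pi : ℂ) * Complex.I * (m : ℂ)) j
    exact coeff_facts (hF j) hL htend
  constructor
  · -- disjointness
    rw [Submodule.disjoint_def]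
    intro G hGP hGS
    obtain ⟨cf, hcf⟩ := Finsupp.mem_span_range_iff_exists_finsupp.1 hGS
    have hcf0 : cf = 0 := by
      by_contra hne
      have hns : cf.support.Nonempty := Finsupp.support_nonempty_iff.mpr hne
      set j := cf.support.max' hns with hj
      have hjmem : j ∈ cf.support := Finset.max'_mem _ _
      have hsum : G.coeff (-((j:ℤ)+1)) =
          ∑ i ∈ cf.support, cf i * (F i).coeff (-((j:ℤ)+1)) := by
        rw [← hcf, Finsupp.sum]
        have hms : (∑ i ∈ cf.support, cf i • F i).coeff (-((j:ℤ)+1)) =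
            ∑ i ∈ cf.support, (cf i • F i).coeff (-((j:ℤ)+1)) :=
          map_sum (HahnSeries.coeff.addMonoidHom (-((j:ℤ)+1))) _ _
        rw [hms]
        exact Finset.sum_congr rfl fun i _ => by rw [HahnSeries.coeff_smul, smul_eq_mul]
      have hsingle : ∑ i ∈ cf.support, cf i * (F i).coeff (-((j:ℤ)+1)) =
          cf j * (F j).coeff (-((j:ℤ)+1)) := by
        apply Finset.sum_eq_single
        · intro i hi hij
          have hij' : i < j := lt_of_le_of_ne (Finset.le_max' _ _ hi) hij
          rw [(hkey i).2 _ (by exact_mod_cast (by omega : -((j:ℤ)+1) < -((i:ℤ)+1))), mul_zero]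
        · intro h; exact absurd hjmem h
      have hzero := hGP (-((j:ℤ)+1)) (by omega)
      rw [hzero, hsingle] at hsum
      have := mul_eq_zero.1 hsum.symm
      rcases this with h | h
      · exact (Finsupp.mem_support_iff.1 hjmem) h
      · exact (hkey j).1 h
    rw [hcf0] at hcf
    simpa using hcf.symm
  · -- codisjointness
    rw [codisjoint_iff, eq_top_iff]
    intro G _
    suffices h : ∀ k : ℕ, ∀ G : LaurentSeries ℂ, (∀ n : ℤ, n < -(k:ℤ) → G.coeff n = 0) →
        G ∈ powerSeriesSubspace ⊔ Submodule.span ℂ (Set.range F) by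
      by_cases hG0 : G = 0
      · rw [hG0]; exact zero_mem _
      · apply h (-G.order).toNat
        intro n hn
        apply HahnSeries.coeff_eq_zero_of_lt_order
        have := Int.self_le_toNat (-G.order)
        omega
    intro k
    induction k with
    | zero =>
      intro G hG
      refine Submodule.mem_sup_left (show G ∈ powerSeriesSubspace from ?_)
      intro n hn
      exact hG n (by exact_mod_cast hn)
    | succ k ih =>
      intro G hG
      set e : ℤ := -((k:ℤ)+1) with he
      set cc : ℂ := G.coeff e / (F k).coeff e with hcc
      have h1 : ∀ n : ℤ, n < -(k:ℤ) → (G - cc • F k).coeff n = 0 := by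
        intro n hn
        rw [HahnSeries.coeff_sub, HahnSeries.coeff_smul, smul_eq_mul]
        rcases lt_or_eq_of_le (show n ≤ e by omega) with hlt | heq
        · rw [hG n (by push_cast; omega), (hkey k).2 n hlt, mul_zero, sub_zero]
        · rw [heq, hcc, div_mul_cancel₀ _ (hkey k).1, sub_self]
      have h2 := ih _ h1
      have h3 : cc • F k ∈ powerSeriesSubspace ⊔ Submodule.span ℂ (Set.range F) :=
        Submodule.mem_sup_right (Submodule.smul_mem _ _ (Submodule.subset_span ⟨k, rfl⟩))
      have h4 : G = (G - cc • F k) + cc • F k := by abel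
      rw [h4]
      exact Submodule.add_mem _ h2 h3
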